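/- Let k ≥ 1 and let h : ℝ → ℂ be Lebesgue measurable such that ∫_ℝ e^{c|ξ|}·|h(ξ)| dξ < ∞ for every c > 0. If ∫_ℝ ξ^n·e^{−i·|ξ|^{2k}·ξ}·h(ξ) dξ = 0 for every n ∈ ℕ, then h = 0 almost everywhere. (This is the core of the proof that the eigenfunction set {ψ_β = D^β F} is complete: the entire function M(z) = ∫ e^{−i|ξ|^{2k}ξ}·h(ξ)·e^{izξ} dξ has all derivatives vanishing at z = 0, hence M ≡ 0 and h = 0 a.e.) -/

import Mathlib

open MeasureTheory

open Real FourierTransform SchwartzMap Complex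
open scoped RealInnerProductSpace

lemma exp_moment_zero (G : ℝ → ℂ) (hGm : AEStronglyMeasurable G volume)
    (hGexp : ∀ c : ℝ, 0 < c → Integrable (fun ξ : ℝ => Real.exp (c * |ξ|) * ‖G ξ‖))
    (hmom : ∀ n : ℕ, (∫ ξ : ℝ, (ξ : ℂ) ^ n * G ξ) = 0) (c : ℂ) :
    (∫ ξ : ℝ, Complex.exp (c * ξ) * G ξ) = 0 := by
  set r : ℝ := ‖c‖ + 1 with hr
  have hr0 : 0 < r := by positivity
  set F : ℕ → ℝ → ℂ := fun n ξ => c ^ n / n.factorial * ((ξ : ℂ) ^ n * G ξ) with hF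
  have hmeasF : ∀ n, AEStronglyMeasurable (F n) volume := by
    intro n
    exact (((Complex.measurable_ofReal.pow_const n).aestronglyMeasurable).mul hGm).const_mul _
  have hnormF : ∀ n ξ, ‖F n ξ‖ = ‖c‖ ^ n / n.factorial * (|ξ| ^ n * ‖G ξ‖) := by
    intro n ξ
    simp [hF, norm_mul, norm_div, norm_pow, Complex.norm_real, Real.norm_eq_abs,
      Complex.norm_natCast]
  have hintF : ∀ n, Integrable (F n) volume := by
    intro n
    refine ((hGexp 1 one_pos).const_mul (‖c‖ ^ n)).mono' (hmeasF n) (ae_of_all _ fun ξ => ?_)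
    rw [hnormF n ξ]
    have h1 : |ξ| ^ n / n.factorial ≤ Real.exp |ξ| :=
      Real.pow_div_factorial_le_exp |ξ| (abs_nonneg ξ) n
    have he : ‖c‖ ^ n / n.factorial * (|ξ| ^ n * ‖G ξ‖)
        = ‖c‖ ^ n * ((|ξ| ^ n / n.factorial) * ‖G ξ‖) := by ring
    rw [he, one_mul]
    exact mul_le_mul_of_nonneg_left
      (mul_le_mul_of_nonneg_right h1 (norm_nonneg _)) (by positivity)
  have hsum : Summable fun n => ∫ ξ : ℝ, ‖F n ξ‖ := by
    have hnn : ∀ n, 0 ≤ ∫ ξ : ℝ, ‖F n ξ‖ := fun n => integral_nonneg fun ξ => norm_nonneg _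
    apply summable_of_sum_range_le hnn
    intro N
    have hswap : ∑ n ∈ Finset.range N, ∫ ξ : ℝ, ‖F n ξ‖ =
        ∫ ξ : ℝ, ∑ n ∈ Finset.range N, ‖F n ξ‖ :=
      (integral_finset_sum _ fun n _ => (hintF n).norm).symm
    rw [hswap]
    refine integral_mono (integrable_finset_sum _ fun n _ => (hintF n).norm) (hGexp r hr0)
      fun ξ => ?_
    simp only [hnormF]
    have : ∑ n ∈ Finset.range N, ‖c‖ ^ n / n.factorial * (|ξ| ^ n * ‖G ξ‖)
        = (∑ n ∈ Finset.range N, (‖c‖ * |ξ|) ^ n / n.factorial) * ‖G ξ‖ := by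
      rw [Finset.sum_mul]; congr 1; ext n; rw [mul_pow]; ring
    rw [this]
    have h2 : (∑ n ∈ Finset.range N, (‖c‖ * |ξ|) ^ n / n.factorial) ≤ Real.exp (‖c‖ * |ξ|) :=
      Real.sum_le_exp_of_nonneg (by positivity) N
    have h3 : Real.exp (‖c‖ * |ξ|) ≤ Real.exp (r * |ξ|) := by
      apply Real.exp_le_exp.2; nlinarith [abs_nonneg ξ, norm_nonneg c]
    exact mul_le_mul_of_nonneg_right (h2.trans h3) (norm_nonneg _)
  have hpt : ∀ ξ : ℝ, Complex.exp (c * ξ) * G ξ = ∑' n, F n ξ := by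
    intro ξ
    have he : Complex.exp (c * ξ) = ∑' n : ℕ, (c * ξ) ^ n / n.factorial := by
      rw [Complex.exp_eq_exp_ℂ, NormedSpace.exp_eq_tsum_div]
    rw [he, ← tsum_mul_right]
    congr 1; ext n
    rw [hF]; push_cast; ring
  calc (∫ ξ : ℝ, Complex.exp (c * ξ) * G ξ) = ∫ ξ : ℝ, ∑' n, F n ξ := by
        simp_rw [hpt]
    _ = ∑' n, ∫ ξ : ℝ, F n ξ := (integral_tsum_of_summable_integral_norm hintF hsum).symm
    _ = 0 := by
        have : ∀ n, (∫ ξ : ℝ, F n ξ) = 0 := by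
          intro n
          rw [hF]
          simp only
          rw [integral_const_mul, hmom n, mul_zero]
        simp [this]

noncomputable def toSchwartz (f : ℝ → ℂ) (hf : ContDiff ℝ (⊤ : ℕ∞) f)
    (hsupp : HasCompactSupport f) : SchwartzMap ℝ ℂ where
  toFun := f
  smooth' := hf
  decay' := by
    intro m n
    have hc : Continuous fun x : ℝ => ‖x‖ ^ m * ‖iteratedFDeriv ℝ n f x‖ :=
      ((continuous_norm.pow m)).mul
        ((hf.continuous_iteratedFDeriv (by exact_mod_cast le_top)).norm)
    have hs : HasCompactSupport fun x : ℝ => ‖x‖ ^ m * ‖iteratedFDeriv ℝ n f x‖ :=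
      ((hsupp.iteratedFDeriv n).norm).mul_left
    obtain ⟨C, hC⟩ := hs.exists_bound_of_continuous hc
    exact ⟨C, fun x => (le_abs_self _).trans ((Real.norm_eq_abs _) ▸ hC x)⟩

/-- Completeness core: if a measurable `h : ℝ → ℂ` has all exponential
moments finite and `∫ ξ^n e^(-i|ξ|^(2k) ξ) h(ξ) dξ = 0` for every `n`, then `h = 0` a.e. -/
theorem stmt18 (k : ℕ) (hk : 1 ≤ k) (h : ℝ → ℂ) (hmeas : Measurable h)
    (hexp : ∀ c : ℝ, 0 < c → Integrable (fun ξ : ℝ => Real.exp (c * |ξ|) * ‖h ξ‖))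
    (hmom : ∀ n : ℕ,
      (∫ ξ : ℝ, (ξ : ℂ) ^ n *
        Complex.exp (-Complex.I * ((|ξ| ^ (2 * k) * ξ : ℝ) : ℂ)) * h ξ) = 0) :
    h =ᵐ[volume] 0 := by
  set G : ℝ → ℂ := fun ξ => Complex.exp (-Complex.I * ((|ξ| ^ (2 * k) * ξ : ℝ) : ℂ)) * h ξ
    with hG
  have hGnorm : ∀ ξ, ‖G ξ‖ = ‖h ξ‖ := by
    intro ξ
    rw [hG]
    simp only [norm_mul]
    have harg : -Complex.I * ((|ξ| ^ (2 * k) * ξ : ℝ) : ℂ)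
        = ((-(|ξ| ^ (2 * k) * ξ) : ℝ) : ℂ) * Complex.I := by push_cast; ring
    rw [harg]
    rw [Complex.norm_exp_ofReal_mul_I, one_mul]
  have hGmeas : AEStronglyMeasurable G volume := by
    apply Measurable.aestronglyMeasurable
    apply Measurable.mul _ hmeas
    apply Complex.measurable_exp.comp
    exact (Complex.measurable_ofReal.comp
      (((_root_.continuous_abs.pow _).mul continuous_id).measurable)).const_mul _
  have hGexp : ∀ c : ℝ, 0 < c → Integrable (fun ξ : ℝ => Real.exp (c * |ξ|) * ‖G ξ‖) := by
    intro c hc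
    simp_rw [hGnorm]
    exact hexp c hc
  have hGmom : ∀ n : ℕ, (∫ ξ : ℝ, (ξ : ℂ) ^ n * G ξ) = 0 := by
    intro n
    rw [← hmom n]
    congr 1; ext ξ; rw [hG, mul_assoc]
  have hGint : Integrable G := by
    refine (hexp 1 one_pos).mono' hGmeas (ae_of_all _ fun ξ => ?_)
    rw [hGnorm, one_mul]
    nlinarith [Real.one_le_exp (abs_nonneg ξ), norm_nonneg (h ξ), Real.exp_pos |ξ|]
  -- Fourier transform of G vanishes
  have hFG : ∀ w : ℝ, 𝓕 G w = 0 := by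
    intro w
    rw [Real.fourier_eq']
    have : (∫ v : ℝ, Complex.exp ((↑(-2 * π * ⟪v, w⟫) * Complex.I)) • G v)
        = ∫ v : ℝ, Complex.exp ((((-2 * π * w : ℝ) : ℂ) * Complex.I) * v) * G v := by
      congr 1; ext v
      rw [smul_eq_mul]
      congr 2
      have hinner : ⟪v, w⟫ = v * w := by
        simp [RCLike.inner_apply, mul_comm]
      rw [hinner]
      push_cast
      ring
    rw [this]
    exact exp_moment_zero G hGmeas hGexp hGmom _
  -- test against smooth compactly supported functions
  have hGzero : ∀ᵐ x ∂(volume : Measure ℝ), G x = 0 := by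
    apply ae_eq_zero_of_integral_contDiff_smul_eq_zero (hGint.locallyIntegrable)
    intro φ hφ hφsupp
    have hΦdiff : ContDiff ℝ (⊤ : ℕ∞) fun x : ℝ => (φ x : ℂ) :=
      Complex.ofRealCLM.contDiff.comp hφ
    have hΦsupp : HasCompactSupport fun x : ℝ => (φ x : ℂ) :=
      hφsupp.comp_left (g := Complex.ofReal) Complex.ofReal_zero
    set Φ : SchwartzMap ℝ ℂ := toSchwartz _ hΦdiff hΦsupp with hΦ
    set ψ : SchwartzMap ℝ ℂ := (fourierTransformCLE ℂ 𝓢(ℝ, ℂ)).symm Φ with hψdef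
    have hψ : 𝓕 ⇑ψ = ⇑Φ := by
      have h1 : (fourierTransformCLE ℂ 𝓢(ℝ, ℂ)) ψ = Φ := (fourierTransformCLE ℂ 𝓢(ℝ, ℂ)).apply_symm_apply Φ
      rw [← h1]; rfl
    have hflip : ((innerₗ ℝ) : ℝ →ₗ[ℝ] ℝ →ₗ[ℝ] ℝ).flip = innerₗ ℝ := by
      apply LinearMap.ext; intro x; apply LinearMap.ext; intro y
      simp [real_inner_comm]
    have hmf := VectorFourier.integral_fourierIntegral_smul_eq_flip (μ := volume) (ν := volume)
      (L := innerₗ ℝ) (f := ⇑ψ) (g := G) Real.continuous_fourierChar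
      (continuous_inner (𝕜 := ℝ) (E := ℝ)) ψ.integrable hGint
    rw [hflip] at hmf
    have hL : ∀ x : ℝ, φ x • G x = (𝓕 ⇑ψ) x • G x := by
      intro x
      rw [hψ]
      show φ x • G x = (φ x : ℂ) * G x
      rw [Complex.real_smul]
    calc ∫ x : ℝ, φ x • G x = ∫ x : ℝ, (𝓕 ⇑ψ) x • G x := by simp_rw [hL]
      _ = ∫ ξ : ℝ, ψ ξ • (𝓕 G) ξ := hmf
      _ = 0 := by simp [hFG]
  filter_upwards [hGzero] with x hx
  rw [hG] at hx
  simp only at hx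
  rcases mul_eq_zero.mp hx with h1 | h2
  · exact absurd h1 (Complex.exp_ne_zero _)
  · exact h2
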